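/- Let m ≥ 13 and n ≥ 13 be integers with m ≡ 2 (mod 3) and n ≡ 2 (mod 3). Then γ_sR(Cₘ ∨ Cₙ) = 2. -/

import Mathlib

open Finset SimpleGraph
open scoped Classical

/-- The sum of `f` over the closed neighborhood of `v` in `G`. -/
noncomputable def closedNbrSum {V : Type*} [Fintype V] (G : SimpleGraph V)
    (f : V → ℤ) (v : V) : ℤ :=
  ∑ u ∈ Finset.univ.filter (fun u => u = v ∨ G.Adj v u), f u

/-- `f` is a signed Roman dominating function on `G`. -/
def IsSRDF {V : Type*} [Fintype V] (G : SimpleGraph V) (f : V → ℤ) : Prop :=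
  (∀ v, f v = -1 ∨ f v = 1 ∨ f v = 2) ∧
  (∀ v, 1 ≤ closedNbrSum G f v) ∧
  (∀ v, f v = -1 → ∃ u, G.Adj v u ∧ f u = 2)

/-- The signed Roman domination number of `G`. -/
noncomputable def gammaSR {V : Type*} [Fintype V] (G : SimpleGraph V) : ℤ :=
  sInf {w : ℤ | ∃ f, IsSRDF G f ∧ w = ∑ v, f v}

/-- The join of two graphs. -/
def graphJoin {V W : Type*} (G : SimpleGraph V) (H : SimpleGraph W) :
    SimpleGraph (V ⊕ W) where
  Adj x y :=
    match x, y with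
    | .inl a, .inl b => G.Adj a b
    | .inr a, .inr b => H.Adj a b
    | _, _ => True
  symm := by
    constructor
    rintro (a | a) (b | b) h <;> simp_all <;> exact h.symm
  loopless := by
    constructor
    rintro (a | a) h <;> simp_all

section Aux

lemma join_adj_ll {V W : Type*} (G : SimpleGraph V) (H : SimpleGraph W) (a b : V) :
    (graphJoin G H).Adj (.inl a) (.inl b) ↔ G.Adj a b := Iff.rfl

lemma join_adj_rr {V W : Type*} (G : SimpleGraph V) (H : SimpleGraph W) (a b : W) :
    (graphJoin G H).Adj (.inr a) (.inr b) ↔ H.Adj a b := Iff.rfl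

lemma join_adj_lr {V W : Type*} (G : SimpleGraph V) (H : SimpleGraph W) (a : V) (b : W) :
    (graphJoin G H).Adj (.inl a) (.inr b) := trivial

lemma join_adj_rl {V W : Type*} (G : SimpleGraph V) (H : SimpleGraph W) (a : W) (b : V) :
    (graphJoin G H).Adj (.inr a) (.inl b) := trivial

lemma fin_val_one {m : ℕ} (hm : 13 ≤ m) [NeZero m] : ((1 : Fin m)).val = 1 := by
  rw [Fin.val_one']
  exact Nat.mod_eq_of_lt (by omega)

lemma fin_adj_iff {m : ℕ} (hm : 13 ≤ m) [NeZero m] (a b : Fin m) :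
    (cycleGraph m).Adj a b ↔ b = a - 1 ∨ b = a + 1 := by
  have h1 : ((1 : Fin m)).val = 1 := fin_val_one hm
  rw [cycleGraph_adj']
  constructor
  · rintro (h | h)
    · left
      have h2 : a - b = 1 := Fin.ext (by rw [h1]; exact h)
      rw [← h2, sub_sub_cancel]
    · right
      have h2 : b - a = 1 := Fin.ext (by rw [h1]; exact h)
      rw [← h2]; abel
  · rintro (rfl | rfl)
    · left; rw [sub_sub_cancel, h1]
    · right; rw [add_sub_cancel_left, h1]

lemma fin_ne1 {m : ℕ} (hm : 13 ≤ m) [NeZero m] (a : Fin m) : a - 1 ≠ a := by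
  intro h
  have h2 : (1 : Fin m) = 0 := sub_eq_self.mp h
  have h3 := congrArg Fin.val h2
  rw [fin_val_one hm, Fin.val_zero] at h3
  omega

lemma fin_ne2 {m : ℕ} (hm : 13 ≤ m) [NeZero m] (a : Fin m) : a ≠ a + 1 := by
  intro h
  have h2 : (1 : Fin m) = 0 := (left_eq_add.mp h)
  have h3 := congrArg Fin.val h2
  rw [fin_val_one hm, Fin.val_zero] at h3
  omega

lemma fin_ne3 {m : ℕ} (hm : 13 ≤ m) [NeZero m] (a : Fin m) : a - 1 ≠ a + 1 := by
  intro h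
  have h2 : a + 1 - (a - 1) = 0 := by rw [h]; simp
  have h2' : a + 1 - (a - 1) = 1 + 1 := by abel
  rw [h2'] at h2
  have h3 := congrArg Fin.val h2
  rw [Fin.val_add, fin_val_one hm, Fin.val_zero, Nat.mod_eq_of_lt (by omega)] at h3
  omega

lemma nbhd_filter {m : ℕ} (hm : 13 ≤ m) [NeZero m] (a : Fin m) :
    Finset.univ.filter (fun b => b = a ∨ (cycleGraph m).Adj a b)
      = {a - 1, a, a + 1} := by
  ext b
  simp only [Finset.mem_filter, Finset.mem_univ, true_and, Finset.mem_insert,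
    Finset.mem_singleton, fin_adj_iff hm]
  tauto

lemma sum_three {m : ℕ} (hm : 13 ≤ m) [NeZero m] (a : Fin m) (h : Fin m → ℤ) :
    ∑ b ∈ ({a - 1, a, a + 1} : Finset (Fin m)), h b
      = h (a - 1) + h a + h (a + 1) := by
  rw [Finset.sum_insert, Finset.sum_insert, Finset.sum_singleton]
  · ring
  · simp only [Finset.mem_singleton]; exact fin_ne2 hm a
  · simp only [Finset.mem_insert, Finset.mem_singleton]
    push_neg
    exact ⟨fin_ne1 hm a, fin_ne3 hm a⟩

lemma cns_inl {m n : ℕ} (hm : 13 ≤ m) [NeZero m] (f : Fin m ⊕ Fin n → ℤ) (a : Fin m) :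
    closedNbrSum (graphJoin (cycleGraph m) (cycleGraph n)) f (Sum.inl a)
      = (f (.inl (a - 1)) + f (.inl a) + f (.inl (a + 1))) + ∑ w, f (.inr w) := by
  rw [closedNbrSum, Finset.sum_filter, Fintype.sum_sum_type]
  simp only [Sum.inl.injEq, join_adj_ll, join_adj_lr, or_true, if_true, ite_true,
    reduceCtorEq]
  rw [← Finset.sum_filter, nbhd_filter hm a, sum_three hm a]

lemma cns_inr {m n : ℕ} (hn : 13 ≤ n) [NeZero n] (f : Fin m ⊕ Fin n → ℤ) (a : Fin n) :
    closedNbrSum (graphJoin (cycleGraph m) (cycleGraph n)) f (Sum.inr a)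
      = (f (.inr (a - 1)) + f (.inr a) + f (.inr (a + 1))) + ∑ w, f (.inl w) := by
  rw [closedNbrSum, Finset.sum_filter, Fintype.sum_sum_type]
  simp only [Sum.inr.injEq, join_adj_rr, join_adj_rl, or_true, if_true, ite_true,
    reduceCtorEq]
  rw [← Finset.sum_filter, nbhd_filter hn a, sum_three hn a]
  ring

lemma shift_sum_sub {m : ℕ} [NeZero m] (h : Fin m → ℤ) :
    ∑ a : Fin m, h (a - 1) = ∑ a : Fin m, h a := by
  simpa using Equiv.sum_comp (Equiv.subRight (1 : Fin m)) h

lemma shift_sum_add {m : ℕ} [NeZero m] (h : Fin m → ℤ) :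
    ∑ a : Fin m, h (a + 1) = ∑ a : Fin m, h a := by
  simpa using Equiv.sum_comp (Equiv.addRight (1 : Fin m)) h

lemma lower_bound {m n : ℕ} (hm : 13 ≤ m) (hn : 13 ≤ n)
    (f : Fin m ⊕ Fin n → ℤ)
    (hf : IsSRDF (graphJoin (cycleGraph m) (cycleGraph n)) f) :
    2 ≤ ∑ v, f v := by
  haveI : NeZero m := ⟨by omega⟩
  haveI : NeZero n := ⟨by omega⟩
  set SV := ∑ a : Fin m, f (.inl a) with hSV
  set SW := ∑ w : Fin n, f (.inr w) with hSW
  have key1 : (m : ℤ) ≤ 3 * SV + m * SW := by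
    have h1 : ∑ _a : Fin m, (1 : ℤ) ≤ ∑ a : Fin m, closedNbrSum
        (graphJoin (cycleGraph m) (cycleGraph n)) f (.inl a) :=
      Finset.sum_le_sum fun a _ => hf.2.1 (.inl a)
    have h2 : ∑ a : Fin m, closedNbrSum
        (graphJoin (cycleGraph m) (cycleGraph n)) f (.inl a)
        = 3 * SV + m * SW := by
      calc ∑ a : Fin m, closedNbrSum
            (graphJoin (cycleGraph m) (cycleGraph n)) f (.inl a)
          = ∑ a : Fin m, ((f (.inl (a - 1)) + f (.inl a) + f (.inl (a + 1))) + SW) :=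
            Finset.sum_congr rfl fun a _ => cns_inl hm f a
        _ = ((∑ a : Fin m, f (.inl (a - 1)) + ∑ a : Fin m, f (.inl a))
              + ∑ a : Fin m, f (.inl (a + 1))) + ∑ _a : Fin m, SW := by
            rw [← Finset.sum_add_distrib, ← Finset.sum_add_distrib,
              ← Finset.sum_add_distrib]
        _ = 3 * SV + m * SW := by
            rw [shift_sum_sub fun a => f (.inl a),
              shift_sum_add fun a => f (.inl a), Finset.sum_const,
              Finset.card_univ, Fintype.card_fin, nsmul_eq_mul, ← hSV]
            ring
    rw [h2] at h1
    calc (m : ℤ) = ∑ _a : Fin m, (1 : ℤ) := by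
          rw [Finset.sum_const, Finset.card_univ, Fintype.card_fin, nsmul_eq_mul]; ring
      _ ≤ 3 * SV + m * SW := h1
  have key2 : (n : ℤ) ≤ 3 * SW + n * SV := by
    have h1 : ∑ _a : Fin n, (1 : ℤ) ≤ ∑ a : Fin n, closedNbrSum
        (graphJoin (cycleGraph m) (cycleGraph n)) f (.inr a) :=
      Finset.sum_le_sum fun a _ => hf.2.1 (.inr a)
    have h2 : ∑ a : Fin n, closedNbrSum
        (graphJoin (cycleGraph m) (cycleGraph n)) f (.inr a)
        = 3 * SW + n * SV := by
      calc ∑ a : Fin n, closedNbrSum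
            (graphJoin (cycleGraph m) (cycleGraph n)) f (.inr a)
          = ∑ a : Fin n, ((f (.inr (a - 1)) + f (.inr a) + f (.inr (a + 1))) + SV) :=
            Finset.sum_congr rfl fun a _ => cns_inr hn f a
        _ = ((∑ a : Fin n, f (.inr (a - 1)) + ∑ a : Fin n, f (.inr a))
              + ∑ a : Fin n, f (.inr (a + 1))) + ∑ _a : Fin n, SV := by
            rw [← Finset.sum_add_distrib, ← Finset.sum_add_distrib,
              ← Finset.sum_add_distrib]
        _ = 3 * SW + n * SV := by
            rw [shift_sum_sub fun a => f (.inr a),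
              shift_sum_add fun a => f (.inr a), Finset.sum_const,
              Finset.card_univ, Fintype.card_fin, nsmul_eq_mul, ← hSW]
            ring
    rw [h2] at h1
    calc (n : ℤ) = ∑ _a : Fin n, (1 : ℤ) := by
          rw [Finset.sum_const, Finset.card_univ, Fintype.card_fin, nsmul_eq_mul]; ring
      _ ≤ 3 * SW + n * SV := h1
  have hmz : (13 : ℤ) ≤ (m : ℤ) := by exact_mod_cast hm
  have hnz : (13 : ℤ) ≤ (n : ℤ) := by exact_mod_cast hn
  have hsum : ∑ v, f v = SV + SW := Fintype.sum_sum_type f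
  rw [hsum]
  by_cases hW : SW ≤ 0
  · nlinarith [mul_nonneg (show (0:ℤ) ≤ (m : ℤ) - 3 by linarith)
      (show (0:ℤ) ≤ -SW by linarith)]
  · by_cases hV : SV ≤ 0
    · nlinarith [mul_nonneg (show (0:ℤ) ≤ (n : ℤ) - 3 by linarith)
        (show (0:ℤ) ≤ -SV by linarith)]
    · omega

/-- The periodic pattern `2, -1, -1, 2, -1, -1, ...`. -/
def gpat (i : ℕ) : ℤ := if i % 3 = 0 then 2 else -1

lemma gpat_cases (i : ℕ) : gpat i = -1 ∨ gpat i = 1 ∨ gpat i = 2 := by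
  unfold gpat; split_ifs <;> simp

lemma gsum_aux : ∀ k : ℕ, ∑ i ∈ Finset.range (3 * k + 2), gpat i = 1 := by
  intro k
  induction k with
  | zero =>
    norm_num [Finset.sum_range_succ, gpat]
  | succ k ih =>
    have h : 3 * (k + 1) + 2 = (3 * k + 2) + 1 + 1 + 1 := by omega
    rw [h, Finset.sum_range_succ, Finset.sum_range_succ, Finset.sum_range_succ, ih]
    have e1 : gpat (3 * k + 2) = -1 := by unfold gpat; split_ifs with h <;> omega
    have e2 : gpat (3 * k + 2 + 1) = 2 := by unfold gpat; split_ifs with h <;> omega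
    have e3 : gpat (3 * k + 2 + 1 + 1) = -1 := by unfold gpat; split_ifs with h <;> omega
    rw [e1, e2, e3]; ring

lemma gsum_fin {m : ℕ} (hm3 : m % 3 = 2) : ∑ a : Fin m, gpat a.val = 1 := by
  rw [Fin.sum_univ_eq_sum_range]
  obtain ⟨k, rfl⟩ : ∃ k, m = 3 * k + 2 := ⟨m / 3, by omega⟩
  exact gsum_aux k

lemma gtriple {m : ℕ} (hm : 13 ≤ m) (hm3 : m % 3 = 2) [NeZero m] (a : Fin m) :
    0 ≤ gpat ((a - 1).val) + gpat (a.val) + gpat ((a + 1).val) := by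
  have hav : a.val < m := a.isLt
  have hsub : (a - 1).val = (m - 1 + a.val) % m := by
    rw [Fin.sub_def, fin_val_one hm]
  have hadd : (a + 1).val = (a.val + 1) % m := by
    rw [Fin.add_def, fin_val_one hm]
  by_cases h0 : a.val = 0
  · have e1 : (a - 1).val = m - 1 := by
      rw [hsub, h0, Nat.add_zero, Nat.mod_eq_of_lt (by omega)]
    have e2 : (a + 1).val = 1 := by
      rw [hadd, h0, Nat.mod_eq_of_lt (by omega)]
    rw [e1, e2, h0]
    unfold gpat
    split_ifs <;> omega
  · by_cases h1 : a.val = m - 1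
    · have e1 : (a - 1).val = m - 2 := by
        rw [hsub, h1, show m - 1 + (m - 1) = m + (m - 2) by omega,
          Nat.add_mod_left, Nat.mod_eq_of_lt (by omega)]
      have e2 : (a + 1).val = 0 := by
        rw [hadd, h1, show m - 1 + 1 = m by omega, Nat.mod_self]
      rw [e1, e2, h1]
      unfold gpat
      split_ifs <;> omega
    · have e1 : (a - 1).val = a.val - 1 := by
        rw [hsub, show m - 1 + a.val = m + (a.val - 1) by omega,
          Nat.add_mod_left, Nat.mod_eq_of_lt (by omega)]
      have e2 : (a + 1).val = a.val + 1 := by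
        rw [hadd, Nat.mod_eq_of_lt (by omega)]
      rw [e1, e2]
      have hge : 1 ≤ a.val := by omega
      unfold gpat
      split_ifs <;> omega

lemma upper_witness {m n : ℕ} (hm : 13 ≤ m) (hn : 13 ≤ n)
    (hm3 : m % 3 = 2) (hn3 : n % 3 = 2) :
    ∃ f, IsSRDF (graphJoin (cycleGraph m) (cycleGraph n)) f ∧ (2 : ℤ) = ∑ v, f v := by
  haveI : NeZero m := ⟨by omega⟩
  haveI : NeZero n := ⟨by omega⟩
  refine ⟨Sum.elim (fun a : Fin m => gpat a.val) (fun w : Fin n => gpat w.val), ?_, ?_⟩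
  · refine ⟨?_, ?_, ?_⟩
    · rintro (a | w) <;> exact gpat_cases _
    · rintro (a | w)
      · rw [cns_inl hm]
        simp only [Sum.elim_inl, Sum.elim_inr]
        rw [gsum_fin hn3]
        linarith [gtriple hm hm3 a]
      · rw [cns_inr hn]
        simp only [Sum.elim_inl, Sum.elim_inr]
        rw [gsum_fin hm3]
        linarith [gtriple hn hn3 w]
    · rintro (a | w) _
      · refine ⟨.inr ⟨0, by omega⟩, join_adj_lr _ _ _ _, ?_⟩
        simp [gpat]
      · refine ⟨.inl ⟨0, by omega⟩, join_adj_rl _ _ _ _, ?_⟩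
        simp [gpat]
  · rw [Fintype.sum_sum_type]
    simp only [Sum.elim_inl, Sum.elim_inr]
    rw [gsum_fin hm3, gsum_fin hn3]
    norm_num

end Aux

theorem stmt6 (m n : ℕ) (hm : 13 ≤ m) (hn : 13 ≤ n)
    (hm3 : m % 3 = 2) (hn3 : n % 3 = 2) :
    gammaSR (graphJoin (cycleGraph m) (cycleGraph n)) = 2 := by
  have hmem : (2 : ℤ) ∈ {w : ℤ | ∃ f, IsSRDF (graphJoin (cycleGraph m) (cycleGraph n)) f
      ∧ w = ∑ v, f v} := upper_witness hm hn hm3 hn3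
  have hlb : ∀ w ∈ {w : ℤ | ∃ f, IsSRDF (graphJoin (cycleGraph m) (cycleGraph n)) f
      ∧ w = ∑ v, f v}, (2 : ℤ) ≤ w := by
    rintro w ⟨f, hf, rfl⟩
    exact lower_bound hm hn f hf
  refine le_antisymm (csInf_le ⟨2, hlb⟩ hmem) (le_csInf ⟨2, hmem⟩ hlb)
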